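/- Let φ : ℝ → ℝ be Lipschitz with constant K > 0 and 1-periodic, let p, q be coprime with q ≥ 1, and suppose the function A_q(φ)(x) = (1/q)·Σ_{k=0}^{q−1} φ(x + k·p/q) is constant on ℝ. Then γ^l_{p/q}(a) = p/q − M(φ)·a + o(a) and γ^r_{p/q}(a) = p/q − M(φ)·a + o(a) as a → 0; that is, lim_{a→0} (γ^l_{p/q}(a) − p/q)/a = lim_{a→0} (γ^r_{p/q}(a) − p/q)/a = −∫₀¹ φ(x) dx. -/

import Mathlib

open Filter Topology Set

/-- `τ` is the translation number of `F`: for every `x`, `(F^[n] x - x)/n → τ`. -/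
def IsTransNum (F : ℝ → ℝ) (τ : ℝ) : Prop :=
  ∀ x : ℝ, Filter.Tendsto (fun n : ℕ => (F^[n] x - x) / n) Filter.atTop (nhds τ)

/-- The average `A_q(φ)` of the translates of `φ` by `p/q`. -/
noncomputable def avgA (φ : ℝ → ℝ) (p : ℤ) (q : ℕ) (x : ℝ) : ℝ :=
  (1 / (q : ℝ)) * ∑ k ∈ Finset.range q, φ (x + (k : ℝ) * (p : ℝ) / (q : ℝ))

noncomputable def Fm (φ : ℝ → ℝ) (t a : ℝ) : ℝ → ℝ := fun x => x + t + a * φ x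

lemma Fm_apply (φ : ℝ → ℝ) (t a x : ℝ) : Fm φ t a x = x + t + a * φ x := rfl

lemma iter_eq (φ : ℝ → ℝ) (t a x : ℝ) (k : ℕ) :
    (Fm φ t a)^[k] x
      = x + k * t + a * ∑ j ∈ Finset.range k, φ ((Fm φ t a)^[j] x) := by
  induction k with
  | zero => simp
  | succ k ih =>
    rw [Function.iterate_succ_apply', Fm_apply, ih, Finset.sum_range_succ, ih]
    push_cast
    ring

-- periodic in integer steps
lemma phi_int (φ : ℝ → ℝ) (hper : ∀ x : ℝ, φ (x + 1) = φ x) (x : ℝ) (n : ℤ) :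
    φ (x + n) = φ x := by
  have h : Function.Periodic φ 1 := hper
  simpa using (h.int_mul n) x

lemma Fm_add_int (φ : ℝ → ℝ) (hper : ∀ x : ℝ, φ (x + 1) = φ x) (t a x : ℝ) (n : ℤ) :
    Fm φ t a (x + n) = Fm φ t a x + n := by
  simp [Fm_apply, phi_int φ hper x n]; ring

lemma iter_add_int (φ : ℝ → ℝ) (hper : ∀ x : ℝ, φ (x + 1) = φ x) (t a x : ℝ) (n : ℤ) (k : ℕ) :
    (Fm φ t a)^[k] (x + n) = (Fm φ t a)^[k] x + n := by
  induction k with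
  | zero => simp
  | succ k ih => rw [Function.iterate_succ_apply', Function.iterate_succ_apply', ih,
      Fm_add_int φ hper]

lemma cont_phi (φ : ℝ → ℝ) (K : ℝ) (hK : 0 < K)
    (hLip : ∀ x y : ℝ, |φ x - φ y| ≤ K * |x - y|) :
    Continuous φ := by
  refine (LipschitzWith.of_dist_le_mul (K := K.toNNReal) (f := φ) fun x y => ?_).continuous
  rw [Real.coe_toNNReal K hK.le]
  simpa [Real.dist_eq] using hLip x y

lemma bound_phi (φ : ℝ → ℝ) (hc : Continuous φ) (hper : ∀ x : ℝ, φ (x + 1) = φ x) :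
    ∃ M : ℝ, 0 ≤ M ∧ ∀ x : ℝ, |φ x| ≤ M := by
  obtain ⟨M, hM⟩ := (isCompact_Icc (a := (0:ℝ)) (b := 1)).exists_bound_of_continuousOn
    hc.continuousOn
  refine ⟨M, le_trans (abs_nonneg _) (by simpa using hM 0 (by norm_num)), fun x => ?_⟩
  have hx : φ x = φ (Int.fract x) := by
    have h2 := phi_int φ hper (Int.fract x) ⌊x⌋
    rw [Int.fract_add_floor] at h2
    exact h2
  rw [hx]
  simpa using hM (Int.fract x) ⟨Int.fract_nonneg x, (Int.fract_lt_one x).le⟩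

lemma iter_bound (φ : ℝ → ℝ) (M : ℝ) (hM : ∀ x, |φ x| ≤ M) (t a x : ℝ) (k : ℕ) :
    |(Fm φ t a)^[k] x - x - k * t| ≤ k * (|a| * M) := by
  rw [iter_eq]
  have h : |a * ∑ j ∈ Finset.range k, φ ((Fm φ t a)^[j] x)| ≤ |a| * (k * M) := by
    rw [abs_mul]
    refine mul_le_mul_of_nonneg_left ?_ (abs_nonneg a)
    calc |∑ j ∈ Finset.range k, φ ((Fm φ t a)^[j] x)|
        ≤ ∑ j ∈ Finset.range k, |φ ((Fm φ t a)^[j] x)| := Finset.abs_sum_le_sum_abs _ _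
      _ ≤ ∑ _j ∈ Finset.range k, M := Finset.sum_le_sum fun j _ => hM _
      _ = k * M := by simp [mul_comm]
  calc |x + k * t + a * ∑ j ∈ Finset.range k, φ ((Fm φ t a)^[j] x) - x - k * t|
      = |a * ∑ j ∈ Finset.range k, φ ((Fm φ t a)^[j] x)| := by ring_nf
    _ ≤ |a| * (k * M) := h
    _ = k * (|a| * M) := by ring

lemma cont_iter (φ : ℝ → ℝ) (hc : Continuous φ) (a x : ℝ) (k : ℕ) :
    Continuous (fun t => (Fm φ t a)^[k] x) := by
  induction k with
  | zero => simpa using continuous_const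
  | succ k ih =>
    have : (fun t => (Fm φ t a)^[k+1] x)
        = fun t => (Fm φ t a)^[k] x + t + a * φ ((Fm φ t a)^[k] x) := by
      funext t; rw [Function.iterate_succ_apply']; rfl
    rw [this]
    exact ((ih.add continuous_id).add (continuous_const.mul (hc.comp ih)))

/-- Existence of `t` such that `F^[q] 0 = p`. -/
lemma exists_fixed (φ : ℝ → ℝ) (hc : Continuous φ) (M : ℝ) (hM : ∀ x, |φ x| ≤ M)
    (a : ℝ) (p : ℤ) (q : ℕ) (hq : 1 ≤ q) :
    ∃ t : ℝ, (Fm φ t a)^[q] 0 = 0 + p ∧ |t - p / q| ≤ |a| * M := by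
  have hq0 : (0:ℝ) < q := by exact_mod_cast hq
  set t₁ : ℝ := p / q - |a| * M
  set t₂ : ℝ := p / q + |a| * M
  have key : ∀ t, |(Fm φ t a)^[q] 0 - q * t| ≤ q * (|a| * M) := by
    intro t
    simpa using iter_bound φ M hM t a 0 q
  have h1 : (Fm φ t₁ a)^[q] 0 ≤ p := by
    have := (abs_le.mp (key t₁)).2
    have : (Fm φ t₁ a)^[q] 0 ≤ q * t₁ + q * (|a| * M) := by linarith
    calc (Fm φ t₁ a)^[q] 0 ≤ q * t₁ + q * (|a| * M) := this
      _ = p := by simp only [t₁]; field_simp; first | ring | skip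
  have h2 : (p:ℝ) ≤ (Fm φ t₂ a)^[q] 0 := by
    have := (abs_le.mp (key t₂)).1
    have h3 : q * t₂ - q * (|a| * M) ≤ (Fm φ t₂ a)^[q] 0 := by linarith
    calc (p:ℝ) = q * t₂ - q * (|a| * M) := by simp only [t₂]; field_simp; first | ring | skip
      _ ≤ _ := h3
  have hle : t₁ ≤ t₂ := by
    have : 0 ≤ |a| * M := mul_nonneg (abs_nonneg a) (le_trans (abs_nonneg _) (hM 0))
    simp only [t₁, t₂]; linarith
  have := intermediate_value_Icc hle (f := fun t => (Fm φ t a)^[q] 0)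
    (cont_iter φ hc a 0 q).continuousOn
  obtain ⟨t, ht, hteq⟩ := this ⟨h1, h2⟩
  refine ⟨t, by simpa using hteq, ?_⟩
  rw [abs_le]
  constructor
  · have := ht.1; simp only [t₁] at this; linarith
  · have := ht.2; simp only [t₂] at this; linarith

lemma iter_mul_fixed (φ : ℝ → ℝ) (hper : ∀ x : ℝ, φ (x + 1) = φ x) (t a x : ℝ)
    (p : ℤ) (q : ℕ) (hfix : (Fm φ t a)^[q] x = x + p) (m : ℕ) :
    (Fm φ t a)^[q * m] x = x + (m : ℝ) * p := by
  induction m with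
  | zero => simp
  | succ m ih =>
    have : q * (m + 1) = q + q * m := by ring
    rw [this, Function.iterate_add_apply, ih]
    have h2 : x + (m:ℝ) * p = x + ((m * p : ℤ) : ℝ) := by push_cast; ring
    rw [h2, iter_add_int φ hper, hfix]
    push_cast; ring

lemma tendsto_subseq (F : ℝ → ℝ) (τ₀ : ℝ) (hτ₀ : IsTransNum F τ₀) (x : ℝ)
    (q : ℕ) (hq : 1 ≤ q) :
    Filter.Tendsto (fun m : ℕ => (F^[q * m] x - x) / ((q * m : ℕ) : ℝ))
      Filter.atTop (nhds τ₀) :=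
  (hτ₀ x).comp (Filter.tendsto_atTop_atTop_of_monotone
    (fun m n h => Nat.mul_le_mul_left q h)
    (fun b => ⟨b, Nat.le_mul_of_pos_left b (by omega)⟩))

lemma transnum_of_fixed (φ : ℝ → ℝ) (hper : ∀ x : ℝ, φ (x + 1) = φ x) (t a τ₀ : ℝ)
    (hτ₀ : IsTransNum (Fm φ t a) τ₀) (p : ℤ) (q : ℕ) (hq : 1 ≤ q)
    (hfix : ∃ x, (Fm φ t a)^[q] x = x + p) : τ₀ = p / q := by
  obtain ⟨x, hfix⟩ := hfix
  have h1 := tendsto_subseq (Fm φ t a) τ₀ hτ₀ x q hq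
  have h2 : ∀ᶠ m : ℕ in Filter.atTop,
      ((Fm φ t a)^[q * m] x - x) / (q * m : ℕ) = (p : ℝ) / q := by
    filter_upwards [Filter.eventually_gt_atTop 0] with m hm
    rw [iter_mul_fixed φ hper t a x p q hfix m]
    have hm' : (m : ℝ) ≠ 0 := by positivity
    have hq' : (q : ℝ) ≠ 0 := by positivity
    push_cast
    field_simp
    ring
  have h3 : Filter.Tendsto (fun m : ℕ => ((Fm φ t a)^[q * m] x - x) / (q * m : ℕ))
      Filter.atTop (nhds ((p:ℝ)/q)) :=
    Filter.Tendsto.congr' (Filter.EventuallyEq.symm h2) tendsto_const_nhds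
  exact tendsto_nhds_unique h1 h3

lemma fixed_of_transnum (φ : ℝ → ℝ) (hcφ : Continuous φ)
    (hper : ∀ x : ℝ, φ (x + 1) = φ x) (t a : ℝ) (p : ℤ) (q : ℕ) (hq : 1 ≤ q)
    (hτ₀ : IsTransNum (Fm φ t a) ((p : ℝ) / (q : ℝ))) :
    ∃ x, (Fm φ t a)^[q] x = x + p := by
  set g : ℝ → ℝ := fun x => (Fm φ t a)^[q] x - x - p with hg
  have hcg : Continuous g := by
    have hcF : Continuous (Fm φ t a) := by
      unfold Fm
      exact (continuous_id.add continuous_const).add (continuous_const.mul hcφ)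
    have : Continuous ((Fm φ t a)^[q]) := hcF.iterate q
    exact (this.sub continuous_id).sub continuous_const
  by_contra hcon
  push_neg at hcon
  have hne : ∀ x, g x ≠ 0 := by
    intro x h
    exact hcon x (by simp only [hg] at h; linarith)
  have hgper : ∀ x, g (x + 1) = g x := by
    intro x
    simp only [hg]
    rw [show (x:ℝ) + 1 = x + ((1:ℤ):ℝ) by norm_num, iter_add_int φ hper]
    push_cast; ring
  have hgfract : ∀ x, g x = g (Int.fract x) := by
    intro x
    have h2 : ∀ y (n : ℤ), g (y + n) = g y := by
      intro y n
      simp only [hg, iter_add_int φ hper]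
      ring
    have := h2 (Int.fract x) ⌊x⌋
    rw [Int.fract_add_floor] at this
    exact this
  have hsign : (∀ x, 0 < g x) ∨ (∀ x, g x < 0) := by
    by_contra hs
    push_neg at hs
    obtain ⟨⟨x₀, hx₀⟩, ⟨x₁, hx₁⟩⟩ := hs
    have hx₀' : g x₀ < 0 := lt_of_le_of_ne hx₀ (hne x₀)
    have hx₁' : 0 < g x₁ := lt_of_le_of_ne (hx₁) (Ne.symm (hne x₁))
    have := intermediate_value_uIcc (a := x₀) (b := x₁) (f := g) hcg.continuousOn
    obtain ⟨x, _, hx⟩ := this (Set.mem_uIcc.mpr (Or.inl ⟨hx₀'.le, hx₁'.le⟩))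
    exact hne x hx
  have key : ∀ (δ : ℝ), 0 < |δ| → (∀ x, δ ≤ g x ∨ g x ≤ δ ∧ δ < 0) → True := fun _ _ _ => trivial
  -- In either sign case we derive a contradiction.
  rcases hsign with hpos | hneg
  · -- g ≥ δ > 0 everywhere
    obtain ⟨x₀, hx₀mem, hx₀min⟩ := (isCompact_Icc (a := (0:ℝ)) (b := 1)).exists_isMinOn
      ⟨0, by norm_num⟩ hcg.continuousOn
    set δ := g x₀ with hδ
    have hδpos : 0 < δ := hpos x₀
    have hlb : ∀ x, δ ≤ g x := by
      intro x
      rw [hgfract x]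
      exact hx₀min ⟨Int.fract_nonneg x, (Int.fract_lt_one x).le⟩
    have hstep : ∀ y, y + (p + δ) ≤ (Fm φ t a)^[q] y := by
      intro y
      have := hlb y
      simp only [hg] at this
      linarith
    have hiter : ∀ m : ℕ, (0:ℝ) + m * (p + δ) ≤ (Fm φ t a)^[q * m] 0 := by
      intro m
      induction m with
      | zero => simp
      | succ m ih =>
        have h2 : q * (m + 1) = q + q * m := by ring
        rw [h2, Function.iterate_add_apply]
        have := hstep ((Fm φ t a)^[q * m] 0)
        push_cast
        push_cast at ih
        linarith
    have hge : (↑p + δ) / q ≤ (p : ℝ) / q := by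
      refine ge_of_tendsto (tendsto_subseq (Fm φ t a) _ (hτ₀) 0 q hq) ?_
      filter_upwards [Filter.eventually_ge_atTop 1] with m hm
      have h0 := hiter m
      have hqm : (0:ℝ) < (q * m : ℕ) := by
        have : 1 ≤ q * m := Nat.one_le_iff_ne_zero.mpr (by positivity)
        exact_mod_cast this
      rw [div_le_div_iff₀ (by positivity) hqm]
      push_cast
      push_cast at h0
      have hm' : (1:ℝ) ≤ m := by exact_mod_cast hm
      nlinarith
    have hq0 : (0:ℝ) < q := by exact_mod_cast hq
    rw [div_le_div_iff₀ hq0 hq0] at hge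
    nlinarith
  · -- g ≤ δ < 0 everywhere
    obtain ⟨x₀, hx₀mem, hx₀max⟩ := (isCompact_Icc (a := (0:ℝ)) (b := 1)).exists_isMaxOn
      ⟨0, by norm_num⟩ hcg.continuousOn
    set δ := g x₀ with hδ
    have hδneg : δ < 0 := hneg x₀
    have hub : ∀ x, g x ≤ δ := by
      intro x
      rw [hgfract x]
      exact hx₀max ⟨Int.fract_nonneg x, (Int.fract_lt_one x).le⟩
    have hstep : ∀ y, (Fm φ t a)^[q] y ≤ y + (p + δ) := by
      intro y
      have := hub y
      simp only [hg] at this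
      linarith
    have hiter : ∀ m : ℕ, (Fm φ t a)^[q * m] 0 ≤ (0:ℝ) + m * (p + δ) := by
      intro m
      induction m with
      | zero => simp
      | succ m ih =>
        have h2 : q * (m + 1) = q + q * m := by ring
        rw [h2, Function.iterate_add_apply]
        have := hstep ((Fm φ t a)^[q * m] 0)
        push_cast
        push_cast at ih
        linarith
    have hge : (p : ℝ) / q ≤ (↑p + δ) / q := by
      refine le_of_tendsto (tendsto_subseq (Fm φ t a) _ (hτ₀) 0 q hq) ?_
      filter_upwards [Filter.eventually_ge_atTop 1] with m hm
      have h0 := hiter m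
      have hqm : (0:ℝ) < (q * m : ℕ) := by
        have : 1 ≤ q * m := Nat.one_le_iff_ne_zero.mpr (by positivity)
        exact_mod_cast this
      rw [div_le_div_iff₀ hqm (by positivity)]
      push_cast
      push_cast at h0
      have hm' : (1:ℝ) ≤ m := by exact_mod_cast hm
      nlinarith
    have hq0 : (0:ℝ) < q := by exact_mod_cast hq
    rw [div_le_div_iff₀ hq0 hq0] at hge
    nlinarith

lemma avg_eq (φ : ℝ → ℝ) (hcφ : Continuous φ) (hper : ∀ x : ℝ, φ (x + 1) = φ x)
    (p : ℤ) (q : ℕ) (hq : 1 ≤ q)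
    (hconst : ∀ x y : ℝ, avgA φ p q x = avgA φ p q y) (y : ℝ) :
    avgA φ p q y = ∫ x in (0:ℝ)..1, φ x := by
  have hq0 : (0:ℝ) < q := by exact_mod_cast hq
  have hper' : Function.Periodic φ 1 := hper
  have hint : ∫ x in (0:ℝ)..1, avgA φ p q x = ∫ x in (0:ℝ)..1, φ x := by
    unfold avgA
    rw [intervalIntegral.integral_const_mul]
    rw [intervalIntegral.integral_finset_sum (fun k _ =>
      Continuous.intervalIntegrable (by continuity) 0 1)]
    have heach : ∀ k ∈ Finset.range q,
        (∫ x in (0:ℝ)..1, φ (x + (k:ℝ) * p / q)) = ∫ x in (0:ℝ)..1, φ x := by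
      intro k _
      rw [intervalIntegral.integral_comp_add_right]
      have := hper'.intervalIntegral_add_eq ((k:ℝ) * p / q) 0
      rw [add_comm (1:ℝ)]
      simpa using this
    rw [Finset.sum_congr rfl heach]
    simp
    field_simp
  have hconst' : ∫ x in (0:ℝ)..1, avgA φ p q x = avgA φ p q y := by
    have : (fun x => avgA φ p q x) = fun _ => avgA φ p q y := funext fun x => hconst x y
    rw [this]
    simp
  rw [← hconst', hint]

lemma key_est (φ : ℝ → ℝ) (K : ℝ) (hLip : ∀ x y : ℝ, |φ x - φ y| ≤ K * |x - y|)
    (M : ℝ) (hM : ∀ x, |φ x| ≤ M) (p : ℤ) (q : ℕ) (hq : 1 ≤ q) (c : ℝ)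
    (hc : ∀ x : ℝ, ∑ k ∈ Finset.range q, φ (x + (k:ℝ) * p / q) = q * c)
    (t a x : ℝ) (hfix : (Fm φ t a)^[q] x = x + p) :
    |t - p / q + a * c| ≤ |a| * K * q * (|t - p / q| + |a| * M) := by
  have hq0 : (0:ℝ) < q := by exact_mod_cast hq
  set D : ℝ := |t - p / q| + |a| * M with hD
  have hM0 : 0 ≤ M := le_trans (abs_nonneg _) (hM 0)
  have hD0 : 0 ≤ D := by positivity
  -- error bound on orbit points
  have he : ∀ k : ℕ, |(Fm φ t a)^[k] x - (x + k * (p / q))| ≤ k * D := by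
    intro k
    induction k with
    | zero => simp
    | succ k ih =>
      rw [Function.iterate_succ_apply', Fm_apply]
      have h1 : |φ ((Fm φ t a)^[k] x)| ≤ M := hM _
      have h2 : |(Fm φ t a)^[k] x + t + a * φ ((Fm φ t a)^[k] x) - (x + (k+1 : ℕ) * (p/q))|
          ≤ |(Fm φ t a)^[k] x - (x + k * (p/q))| + |t - p/q| + |a * φ ((Fm φ t a)^[k] x)| := by
        have : (Fm φ t a)^[k] x + t + a * φ ((Fm φ t a)^[k] x) - (x + (k+1 : ℕ) * (p/q))
            = ((Fm φ t a)^[k] x - (x + k * (p/q))) + (t - p/q)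
              + (a * φ ((Fm φ t a)^[k] x)) := by push_cast; ring
        rw [this]
        exact le_trans (abs_add_le _ _) (add_le_add_left (abs_add_le _ _) _)
      have h3 : |a * φ ((Fm φ t a)^[k] x)| ≤ |a| * M := by
        rw [abs_mul]; exact mul_le_mul_of_nonneg_left h1 (abs_nonneg a)
      push_cast
      push_cast at h2 ih
      simp only [hD]
      linarith
  -- sum comparison
  have hsum : |(∑ j ∈ Finset.range q, φ ((Fm φ t a)^[j] x)) - q * c| ≤ q * (K * (q * D)) := by
    rw [← hc x, ← Finset.sum_sub_distrib]
    refine le_trans (Finset.abs_sum_le_sum_abs _ _) ?_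
    have : ∀ j ∈ Finset.range q,
        |φ ((Fm φ t a)^[j] x) - φ (x + (j:ℝ) * p / q)| ≤ K * (q * D) := by
      intro j hj
      refine le_trans (hLip _ _) ?_
      have hK0 : 0 ≤ K := by
        by_contra h
        push_neg at h
        have := hLip 0 1
        have : K * |(0:ℝ) - 1| < 0 := mul_neg_of_neg_of_pos h (by norm_num)
        linarith [abs_nonneg (φ 0 - φ 1), hLip 0 1]
      refine mul_le_mul_of_nonneg_left ?_ hK0
      have := he j
      have hj' : (j : ℝ) ≤ q := by
        have := Finset.mem_range.mp hj
        exact_mod_cast this.le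
      have h4 : |(Fm φ t a)^[j] x - (x + (j:ℝ) * p / q)| ≤ j * D := by
        have heq : x + (j:ℝ) * p / q = x + (j:ℝ) * (p / q) := by ring
        rw [heq]; exact this
      calc |(Fm φ t a)^[j] x - (x + (j:ℝ) * p / q)| ≤ j * D := h4
        _ ≤ q * D := mul_le_mul_of_nonneg_right hj' hD0
    refine le_trans (Finset.sum_le_sum this) ?_
    simp [mul_comm]
  -- the fixed point equation
  have heq : q * t + a * (∑ j ∈ Finset.range q, φ ((Fm φ t a)^[j] x)) = p := by
    have := iter_eq φ t a x q
    rw [hfix] at this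
    linarith
  have hfinal : t - p / q + a * c
      = -(a * ((∑ j ∈ Finset.range q, φ ((Fm φ t a)^[j] x)) - q * c)) / q := by
    field_simp
    linarith
  rw [hfinal, abs_div, abs_neg, abs_mul, abs_of_pos hq0]
  rw [div_le_iff₀ hq0]
  calc |a| * |(∑ j ∈ Finset.range q, φ ((Fm φ t a)^[j] x)) - q * c|
      ≤ |a| * (q * (K * (q * D))) := mul_le_mul_of_nonneg_left hsum (abs_nonneg a)
    _ = |a| * K * q * D * q := by ring

lemma final_tendsto (f : ℝ → ℝ) (r c C a₀ : ℝ) (hC : 0 ≤ C) (ha₀ : 0 < a₀)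
    (hbound : ∀ a : ℝ, a ≠ 0 → |a| < a₀ → |f a - (r - a * c)| ≤ C * a ^ 2) :
    Filter.Tendsto (fun a : ℝ => (f a - r) / a) (nhdsWithin 0 {0}ᶜ) (nhds (-c)) := by
  rw [Metric.tendsto_nhdsWithin_nhds]
  intro ε hε
  refine ⟨min a₀ (ε / (C + 1)), lt_min ha₀ (by positivity), ?_⟩
  intro a ha hdist
  have ha' : a ≠ 0 := by simpa using ha
  rw [Real.dist_eq, sub_zero] at hdist
  have h1 : |a| < a₀ := lt_of_lt_of_le hdist (min_le_left _ _)
  have h2 : |a| < ε / (C + 1) := lt_of_lt_of_le hdist (min_le_right _ _)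
  have hb := hbound a ha' h1
  have habs : (0:ℝ) < |a| := abs_pos.mpr ha'
  rw [Real.dist_eq]
  have heq : (f a - r) / a - (-c) = (f a - (r - a * c)) / a := by
    field_simp
    ring
  rw [heq, abs_div]
  rw [div_lt_iff₀ habs]
  have hsq : C * a ^ 2 = C * |a| * |a| := by
    rw [← sq_abs a]; ring
  have : |f a - (r - a * c)| ≤ C * |a| * |a| := by rw [← hsq]; exact hb
  have hfin : C * |a| < ε := by
    have h3 : C * |a| ≤ C * (ε / (C + 1)) := mul_le_mul_of_nonneg_left h2.le hC
    have h4 : C * (ε / (C + 1)) < ε := by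
      rw [mul_div_assoc']
      rw [div_lt_iff₀ (by positivity)]
      nlinarith
    linarith
  nlinarith

theorem stmt_12 (φ : ℝ → ℝ) (K : ℝ) (hK : 0 < K)
    (hLip : ∀ x y : ℝ, |φ x - φ y| ≤ K * |x - y|)
    (hper : ∀ x : ℝ, φ (x + 1) = φ x)
    (τ : ℝ → ℝ → ℝ)
    (hτ : ∀ t : ℝ, ∀ a ∈ Set.Ioo (-(1 / K)) (1 / K),
      IsTransNum (fun x => x + t + a * φ x) (τ t a))
    (p : ℤ) (q : ℕ) (hq : 1 ≤ q) (hpq : Nat.Coprime p.natAbs q)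
    (hconst : ∀ x y : ℝ, avgA φ p q x = avgA φ p q y) :
    Filter.Tendsto
      (fun a : ℝ => (sInf {t : ℝ | τ t a = (p : ℝ) / (q : ℝ)} - (p : ℝ) / (q : ℝ)) / a)
      (nhdsWithin 0 {0}ᶜ) (nhds (-∫ x in (0 : ℝ)..1, φ x)) ∧
    Filter.Tendsto
      (fun a : ℝ => (sSup {t : ℝ | τ t a = (p : ℝ) / (q : ℝ)} - (p : ℝ) / (q : ℝ)) / a)
      (nhdsWithin 0 {0}ᶜ) (nhds (-∫ x in (0 : ℝ)..1, φ x)) := by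
  have hcφ : Continuous φ := cont_phi φ K hK hLip
  obtain ⟨M, hM0, hM⟩ := bound_phi φ hcφ hper
  have hq0 : (0:ℝ) < q := by exact_mod_cast hq
  set c : ℝ := ∫ x in (0:ℝ)..1, φ x with hcdef
  have havg : ∀ x : ℝ, ∑ k ∈ Finset.range q, φ (x + (k:ℝ) * p / q) = q * c := by
    intro x
    have h := avg_eq φ hcφ hper p q hq hconst x
    unfold avgA at h
    rw [← hcdef] at h
    rw [← h, ← mul_assoc, mul_one_div, div_self hq0.ne', one_mul]
  set C : ℝ := K * q * (2 * M + 2 * |c|) with hCdef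
  have hC0 : 0 ≤ C := by positivity
  set a₀ : ℝ := min (min 1 (1 / (2 * K * q))) (1 / (2 * K)) with ha₀def
  have ha₀ : 0 < a₀ := by positivity
  -- the main estimate for all elements of the fiber, plus nonemptiness
  have main : ∀ a : ℝ, a ≠ 0 → |a| < a₀ →
      (∀ t ∈ {t : ℝ | τ t a = (p : ℝ) / (q : ℝ)}, |t - ((p:ℝ)/q - a * c)| ≤ C * a ^ 2)
        ∧ {t : ℝ | τ t a = (p : ℝ) / (q : ℝ)}.Nonempty := by
    intro a ha hasmall
    have ha1 : |a| ≤ 1 := le_trans hasmall.le (le_trans (min_le_left _ _) (min_le_left _ _))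
    have ha2 : |a| * (K * q) ≤ 1 / 2 := by
      have h1 : |a| < 1 / (2 * K * q) :=
        lt_of_lt_of_le hasmall (le_trans (min_le_left _ _) (min_le_right _ _))
      rw [lt_div_iff₀ (by positivity)] at h1
      linarith
    have haK : |a| < 1 / K := by
      have h1 : |a| < 1 / (2 * K) := lt_of_lt_of_le hasmall (min_le_right _ _)
      have : 1 / (2 * K) < 1 / K := by
        rw [div_lt_div_iff₀ (by positivity) (by positivity)]
        linarith
      linarith
    have haIoo : a ∈ Set.Ioo (-(1 / K)) (1 / K) := by
      rw [Set.mem_Ioo]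
      constructor
      · have := neg_abs_le a; linarith
      · have := le_abs_self a; linarith
    constructor
    · intro t ht
      have hτt : IsTransNum (Fm φ t a) ((p:ℝ)/q) := by
        have := hτ t a haIoo
        rw [Set.mem_setOf_eq] at ht
        rw [← ht]
        exact this
      obtain ⟨x, hfix⟩ := fixed_of_transnum φ hcφ hper t a p q hq hτt
      have hkey := key_est φ K hLip M hM p q hq c havg t a x hfix
      -- first bound |t - p/q|
      set X : ℝ := |t - (p:ℝ)/q| with hX
      have hX0 : 0 ≤ X := abs_nonneg _
      have hXb : X ≤ |a| * (M + 2 * |c|) := by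
        have h1 : X ≤ |t - (p:ℝ)/q + a * c| + |a| * |c| := by
          have : t - (p:ℝ)/q = (t - (p:ℝ)/q + a * c) + (-(a * c)) := by ring
          calc X = |(t - (p:ℝ)/q + a * c) + (-(a * c))| := by rw [hX, ← this]
            _ ≤ |t - (p:ℝ)/q + a * c| + |-(a * c)| := abs_add_le _ _
            _ = |t - (p:ℝ)/q + a * c| + |a| * |c| := by rw [abs_neg, abs_mul]
        have h2 : |a| * K * (q:ℝ) * (X + |a| * M) ≤ (1/2) * (X + |a| * M) := by
          have : (0:ℝ) ≤ X + |a| * M := by positivity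
          nlinarith [ha2]
        nlinarith [hkey, abs_nonneg a]
      have h3 : |t - (p:ℝ)/q + a * c| ≤ C * a ^ 2 := by
        have h4 : |a| * K * (q:ℝ) * (X + |a| * M)
            ≤ |a| * K * (q:ℝ) * (|a| * (M + 2 * |c|) + |a| * M) := by
          have : (0:ℝ) ≤ |a| * K * q := by positivity
          nlinarith [hXb]
        have h5 : |a| * K * (q:ℝ) * (|a| * (M + 2 * |c|) + |a| * M) = C * a ^ 2 := by
          rw [hCdef, ← sq_abs a]
          ring
        calc |t - (p:ℝ)/q + a * c| ≤ |a| * K * (q:ℝ) * (X + |a| * M) := hkey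
          _ ≤ _ := h4
          _ = C * a ^ 2 := h5
      have : t - ((p:ℝ)/q - a * c) = t - (p:ℝ)/q + a * c := by ring
      rw [this]
      exact h3
    · obtain ⟨t, hfix, _⟩ := exists_fixed φ hcφ M hM a p q hq
      refine ⟨t, ?_⟩
      rw [Set.mem_setOf_eq]
      exact transnum_of_fixed φ hper t a (τ t a) (hτ t a haIoo) p q hq ⟨0, hfix⟩
  -- bounds for sInf and sSup
  have hbounds : ∀ a : ℝ, a ≠ 0 → |a| < a₀ →
      |sInf {t : ℝ | τ t a = (p : ℝ) / (q : ℝ)} - ((p:ℝ)/q - a * c)| ≤ C * a ^ 2 ∧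
      |sSup {t : ℝ | τ t a = (p : ℝ) / (q : ℝ)} - ((p:ℝ)/q - a * c)| ≤ C * a ^ 2 := by
    intro a ha hasmall
    obtain ⟨hest, ⟨t₀, ht₀⟩⟩ := main a ha hasmall
    set S := {t : ℝ | τ t a = (p : ℝ) / (q : ℝ)} with hS
    have hlb : ∀ t ∈ S, (p:ℝ)/q - a * c - C * a ^ 2 ≤ t := by
      intro t ht
      have := (abs_le.mp (hest t ht)).1
      linarith
    have hub : ∀ t ∈ S, t ≤ (p:ℝ)/q - a * c + C * a ^ 2 := by
      intro t ht
      have := (abs_le.mp (hest t ht)).2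
      linarith
    have hbdd : BddBelow S := ⟨(p:ℝ)/q - a * c - C * a ^ 2, hlb⟩
    have hbdd' : BddAbove S := ⟨(p:ℝ)/q - a * c + C * a ^ 2, hub⟩
    constructor
    · rw [abs_le]
      constructor
      · have : (p:ℝ)/q - a * c - C * a ^ 2 ≤ sInf S := le_csInf ⟨t₀, ht₀⟩ hlb
        linarith
      · have h1 : sInf S ≤ t₀ := csInf_le hbdd ht₀
        have := hub t₀ ht₀
        linarith
    · rw [abs_le]
      constructor
      · have h1 : t₀ ≤ sSup S := le_csSup hbdd' ht₀
        have := hlb t₀ ht₀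
        linarith
      · have : sSup S ≤ (p:ℝ)/q - a * c + C * a ^ 2 := csSup_le ⟨t₀, ht₀⟩ hub
        linarith
  constructor
  · exact final_tendsto _ _ c C a₀ hC0 ha₀ (fun a ha h => (hbounds a ha h).1)
  · exact final_tendsto _ _ c C a₀ hC0 ha₀ (fun a ha h => (hbounds a ha h).2)
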